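/- Let A and B be n×n real symmetric positive-definite matrices, and let E = B^{1/2}(B^{-1/2} A B^{-1/2})^{1/2} B^{-1/2}. Then E · (B^{1/2} log(B^{-1/2} A B^{-1/2}) B^{1/2}) · E^T = -A^{1/2} log(A^{-1/2} B A^{-1/2}) A^{1/2}; i.e., parallel transport maps the initial geodesic velocity Log_B(A) to the terminal geodesic velocity -Log_A(B). -/

import Mathlib

open Matrix

set_option maxHeartbeats 1000000

private lemma exp_inj_symm {n : ℕ} {X Y : Matrix (Fin n) (Fin n) ℝ} (hX : X.IsSymm)
    (hY : Y.IsSymm) (h : NormedSpace.exp X = NormedSpace.exp Y) : X = Y := by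
  let _ : NormedRing (Matrix (Fin n) (Fin n) ℝ) := Matrix.instL2OpNormedRing
  let _ : NormedAlgebra ℝ (Matrix (Fin n) (Fin n) ℝ) := Matrix.instL2OpNormedAlgebra
  have hX' : IsSelfAdjoint X := by
    rw [isSelfAdjoint_iff, star_eq_conjTranspose, conjTranspose_eq_transpose_of_trivial]
    exact hX.eq
  have hY' : IsSelfAdjoint Y := by
    rw [isSelfAdjoint_iff, star_eq_conjTranspose, conjTranspose_eq_transpose_of_trivial]
    exact hY.eq
  have := CFC.log_exp X hX'
  rw [h, CFC.log_exp Y hY'] at this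
  exact this.symm

private lemma posSemidef_exp_smul {n : ℕ} {L : Matrix (Fin n) (Fin n) ℝ} (hL : L.IsSymm)
    (c : ℝ) : (NormedSpace.exp (c • L)).PosSemidef := by
  have hq : NormedSpace.exp ((c/2) • L) * NormedSpace.exp ((c/2) • L)
      = NormedSpace.exp (c • L) := by
    rw [← Matrix.exp_add_of_commute ((c/2) • L) ((c/2) • L)
      (((Commute.refl L).smul_left _).smul_right _), ← add_smul]
    norm_num
  have hsym : (NormedSpace.exp ((c/2) • L))ᴴ = NormedSpace.exp ((c/2) • L) := by
    rw [← Matrix.exp_conjTranspose, conjTranspose_eq_transpose_of_trivial,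
      transpose_smul, hL.eq]
  have := Matrix.posSemidef_conjTranspose_mul_self (NormedSpace.exp ((c/2) • L))
  rwa [hsym, hq] at this


/-- With `E = B^{1/2}(B^{-1/2} A B^{-1/2})^{1/2} B^{-1/2}`, parallel transport maps
the initial geodesic velocity `Log_B(A) = B^{1/2} log(B^{-1/2} A B^{-1/2}) B^{1/2}` to the
terminal velocity `-Log_A(B) = -A^{1/2} log(A^{-1/2} B A^{-1/2}) A^{1/2}`. -/
theorem stmt_9 (n : ℕ) (A B sA sB sC Lc L' : Matrix (Fin n) (Fin n) ℝ)
    (hA : A.PosDef) (hB : B.PosDef)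
    (hsA : sA.PosDef) (hsA2 : sA * sA = A)
    (hsB : sB.PosDef) (hsB2 : sB * sB = B)
    (hsC : sC.PosDef) (hsC2 : sC * sC = sB⁻¹ * A * sB⁻¹)
    (hLc : Lc.IsSymm) (hexpC : NormedSpace.exp Lc = sB⁻¹ * A * sB⁻¹)
    (hL' : L'.IsSymm) (hexpL' : NormedSpace.exp L' = sA⁻¹ * B * sA⁻¹) :
    (sB * sC * sB⁻¹) * (sB * Lc * sB) * (sB * sC * sB⁻¹)ᵀ = -(sA * L' * sA) := by
  haveI : Invertible sA := sA.invertibleOfIsUnitDet (isUnit_iff_ne_zero.mpr hsA.det_pos.ne')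
  haveI : Invertible sB := sB.invertibleOfIsUnitDet (isUnit_iff_ne_zero.mpr hsB.det_pos.ne')
  haveI : Invertible A := A.invertibleOfIsUnitDet (isUnit_iff_ne_zero.mpr hA.det_pos.ne')
  have tsA : sAᵀ = sA := by
    rw [← conjTranspose_eq_transpose_of_trivial]; exact hsA.isHermitian
  have tsB : sBᵀ = sB := by
    rw [← conjTranspose_eq_transpose_of_trivial]; exact hsB.isHermitian
  have tsC : sCᵀ = sC := by
    rw [← conjTranspose_eq_transpose_of_trivial]; exact hsC.isHermitian
  have tsAi : sA⁻¹ᵀ = sA⁻¹ := by rw [transpose_nonsing_inv, tsA]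
  have tsBi : sB⁻¹ᵀ = sB⁻¹ := by rw [transpose_nonsing_inv, tsB]
  have hsCe : sC = NormedSpace.exp ((2⁻¹ : ℝ) • Lc) := by
    let _ : NormedRing (Matrix (Fin n) (Fin n) ℝ) := Matrix.instL2OpNormedRing
    let _ : NormedAlgebra ℝ (Matrix (Fin n) (Fin n) ℝ) := Matrix.instL2OpNormedAlgebra
    open scoped MatrixOrder in
    refine (CFC.sq_eq_sq_iff _ _ hsC.posSemidef.nonneg (posSemidef_exp_smul hLc _).nonneg).mp ?_
    rw [pow_two, pow_two, hsC2, ← hexpC,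
      ← Matrix.exp_add_of_commute ((2⁻¹:ℝ) • Lc) ((2⁻¹:ℝ) • Lc)
        (((Commute.refl Lc).smul_left _).smul_right _), ← add_smul]
    norm_num
  have hcomm : sC * Lc = Lc * sC := by
    rw [hsCe]
    exact (((Commute.refl Lc).smul_left ((2⁻¹:ℝ))).exp_left).eq
  have hcp : Lc * (sB⁻¹ * A * sB⁻¹) = sB⁻¹ * A * sB⁻¹ * Lc := by
    have := ((Commute.refl Lc).exp_right).eq
    rwa [hexpC] at this
  -- LHS = sB * Lc * sB⁻¹ * A
  have hLHS : (sB * sC * sB⁻¹) * (sB * Lc * sB) * (sB * sC * sB⁻¹)ᵀ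
      = sB * Lc * sB⁻¹ * A := by
    have e1 : sC * Lc * sC = Lc * (sB⁻¹ * A * sB⁻¹) := by
      rw [hcomm, Matrix.mul_assoc, hsC2]
    rw [transpose_mul, transpose_mul, tsC, tsB, tsBi]
    calc sB * sC * sB⁻¹ * (sB * Lc * sB) * (sB⁻¹ * (sC * sB))
        = sB * (sC * Lc * sC) * sB := by
          simp only [Matrix.mul_assoc, Matrix.inv_mul_cancel_left_of_invertible,
            Matrix.mul_inv_cancel_left_of_invertible]
      _ = sB * Lc * sB⁻¹ * A := by
          rw [e1]
          simp only [Matrix.mul_assoc, Matrix.inv_mul_cancel_left_of_invertible,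
            Matrix.mul_inv_cancel_left_of_invertible, Matrix.mul_inv_of_invertible,
            Matrix.inv_mul_of_invertible, Matrix.mul_one]
  rw [hLHS]
  have key2 : sB * (Lc * (sB⁻¹ * A)) = A * (sB⁻¹ * (Lc * sB)) := by
    have h := congrArg (fun X => sB * X * sB) hcp
    simp only [Matrix.mul_assoc, Matrix.inv_mul_cancel_left_of_invertible,
      Matrix.mul_inv_cancel_left_of_invertible, Matrix.mul_inv_of_invertible,
      Matrix.inv_mul_of_invertible, Matrix.mul_one] at h
    exact h
  -- M symmetric
  have hMsymm : (-(sA⁻¹ * (sB * Lc * sB⁻¹) * sA)).IsSymm := by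
    have h6 := congrArg (fun X => sA⁻¹ * X * sA⁻¹) key2
    rw [← hsA2] at h6
    simp only [Matrix.mul_assoc, Matrix.inv_mul_cancel_left_of_invertible,
      Matrix.mul_inv_cancel_left_of_invertible, Matrix.mul_inv_of_invertible,
      Matrix.inv_mul_of_invertible, Matrix.mul_one] at h6
    rw [Matrix.IsSymm, transpose_neg, transpose_mul, transpose_mul, transpose_mul,
      transpose_mul, tsA, tsAi, tsB, tsBi, hLc.eq]
    simp only [Matrix.mul_assoc]
    rw [h6]
  -- exp M = exp L'
  have hexpM : NormedSpace.exp (-(sA⁻¹ * (sB * Lc * sB⁻¹) * sA)) = NormedSpace.exp L' := by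
    have hU : IsUnit (sA⁻¹ * sB) := (isUnit_of_invertible sA⁻¹).mul (isUnit_of_invertible sB)
    have hUi : (sA⁻¹ * sB)⁻¹ = sB⁻¹ * sA := by
      rw [Matrix.mul_inv_rev, Matrix.nonsing_inv_nonsing_inv _
        (isUnit_iff_ne_zero.mpr hsA.det_pos.ne')]
    have hAi : A⁻¹ = sA⁻¹ * sA⁻¹ := by rw [← hsA2, Matrix.mul_inv_rev]
    have hsB2' : ∀ X : Matrix (Fin n) (Fin n) ℝ, sB * (sB * X) = B * X := fun X => by
      rw [← Matrix.mul_assoc, hsB2]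
    have hMc : -(sA⁻¹ * (sB * Lc * sB⁻¹) * sA) = (sA⁻¹ * sB) * (-Lc) * (sA⁻¹ * sB)⁻¹ := by
      rw [hUi]
      simp only [Matrix.mul_neg, Matrix.neg_mul, Matrix.mul_assoc]
    rw [hMc, Matrix.exp_conj _ _ hU, Matrix.exp_neg, hexpC, hUi, hexpL',
      Matrix.mul_inv_rev, Matrix.mul_inv_rev, Matrix.nonsing_inv_nonsing_inv _
        (isUnit_iff_ne_zero.mpr hsB.det_pos.ne')]
    simp only [hAi, Matrix.mul_assoc, Matrix.inv_mul_cancel_left_of_invertible,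
      Matrix.mul_inv_cancel_left_of_invertible, Matrix.mul_inv_of_invertible,
      Matrix.inv_mul_of_invertible, Matrix.mul_one]
    rw [hsB2']
  have hML := exp_inj_symm hMsymm hL' hexpM
  rw [← hML]
  simp only [Matrix.mul_neg, Matrix.neg_mul, neg_neg, Matrix.mul_assoc,
    Matrix.mul_inv_cancel_left_of_invertible, Matrix.inv_mul_cancel_left_of_invertible,
    hsA2]
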